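/- Let V and W be real inner product spaces, C ≥ 0, and B : V × V → W a symmetric bilinear map satisfying ⟨B(X,Z), B(Y,Z)⟩ = C·⟨X,Y⟩·⟨Z,Z⟩ for all X,Y,Z. Then for any orthogonal pair X ⊥ Y one has ⟨B(X,X), B(Y,Y)⟩ = −C·⟨X,X⟩·⟨Y,Y⟩. -/
import Mathlib


open scoped RealInnerProductSpace

/-- If a symmetric bilinear map satisfies `⟪B X Z, B Y Z⟫ = C ⟪X, Y⟫ ⟪Z, Z⟫`, then for
orthogonal `X, Y` one has `⟪B X X, B Y Y⟫ = -C ⟪X, X⟫ ⟪Y, Y⟫`. -/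
theorem stmt1 {V W : Type*} [NormedAddCommGroup V] [InnerProductSpace ℝ V]
    [NormedAddCommGroup W] [InnerProductSpace ℝ W]
    (C : ℝ) (hC : 0 ≤ C)
    (B : V →ₗ[ℝ] V →ₗ[ℝ] W) (hsymm : ∀ X Y : V, B X Y = B Y X)
    (hB : ∀ X Y Z : V, ⟪B X Z, B Y Z⟫ = C * ⟪X, Y⟫ * ⟪Z, Z⟫) :
    ∀ X Y : V, ⟪X, Y⟫ = 0 →
      ⟪B X X, B Y Y⟫ = -C * ⟪X, X⟫ * ⟪Y, Y⟫ := by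
  intro X Y hXY
  have h := hB X Y (X + Y)
  have h1 := hB X Y X
  have h2 := hB X Y Y
  have h3 := hB X X Y
  rw [map_add, map_add, inner_add_left, inner_add_right, inner_add_right,
    hsymm Y X] at h
  rw [hsymm Y X] at h1
  rw [h1, h2, h3, hXY] at h
  rw [hXY] at h1 h2
  linarith [h, h1, h2]
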